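/- Let r ≥ 2 be an integer and let δ be a real number with 0 < δ < r^{−60} and δ·n² > n/r. Suppose G is a K_{r+1}-free graph on n vertices with e(G) ≥ t_r(n) − δ·n². Then there is a vertex subset S ⊆ V(G) with |S| ≤ 2δ·r^{10}·n such that every vertex v ∉ S satisfies d_{G−S}(v) ≥ n·((r−1)/r − r^{−10}), where d_{G−S}(v) is the degree of v in the induced subgraph G − S. -/

import Mathlib

open SimpleGraph

/-- The number of edges of a graph. -/
noncomputable def edgeCount {V : Type*} (G : SimpleGraph V) : ℕ := Nat.card G.edgeSet

/-- `t_r(n)`: the number of edges of the Turán graph `T_r(n)`. -/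
noncomputable def turanNum (r n : ℕ) : ℕ := edgeCount (turanGraph n r)

/-- `D_r(G)`: the minimum number of edges that must be removed from `G` to make it
`r`-partite (i.e. `r`-colorable). -/
noncomputable def minDel {V : Type*} (r : ℕ) (G : SimpleGraph V) : ℕ :=
  sInf {k | ∃ H : SimpleGraph V, H ≤ G ∧ H.Colorable r ∧ edgeCount G = edgeCount H + k}

/-- The blowup `G[n₁,…,n_k]` of a graph `G` on `Fin k`. -/
def blowup {k : ℕ} (G : SimpleGraph (Fin k)) (n : Fin k → ℕ) :
    SimpleGraph ((i : Fin k) × Fin (n i)) :=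
  SimpleGraph.comap Sigma.fst G

/-- The adjacency relation of the pentagon `v₁v₂v₅v₄v₃` on `{0,…,4}` (0-indexed),
i.e. the edges `v₁v₂, v₂v₅, v₅v₄, v₄v₃, v₃v₁`. -/
def pentAdj (a b : ℕ) : Prop :=
  (a = 0 ∧ b = 1) ∨ (a = 1 ∧ b = 0) ∨ (a = 1 ∧ b = 4) ∨ (a = 4 ∧ b = 1) ∨
  (a = 4 ∧ b = 3) ∨ (a = 3 ∧ b = 4) ∨ (a = 3 ∧ b = 2) ∨ (a = 2 ∧ b = 3) ∨
  (a = 2 ∧ b = 0) ∨ (a = 0 ∧ b = 2)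

lemma pentAdj_symm {a b : ℕ} (h : pentAdj a b) : pentAdj b a := by
  rcases h with ⟨rfl, rfl⟩|⟨rfl, rfl⟩|⟨rfl, rfl⟩|⟨rfl, rfl⟩|⟨rfl, rfl⟩|⟨rfl, rfl⟩|⟨rfl, rfl⟩|⟨rfl, rfl⟩|⟨rfl, rfl⟩|⟨rfl, rfl⟩ <;> simp [pentAdj]

/-- The graph `L_r` on `r+3` vertices: the first five vertices induce the pentagon
`v₁v₂v₅v₄v₃`, and all other pairs of distinct vertices are adjacent. -/
def Lgraph (r : ℕ) : SimpleGraph (Fin (r + 3)) where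
  Adj a b := a ≠ b ∧ (5 ≤ (a : ℕ) ∨ 5 ≤ (b : ℕ) ∨ pentAdj (a : ℕ) (b : ℕ))
  symm := ⟨fun a b h => ⟨h.1.symm, by
    rcases h.2 with h2 | h2 | h2
    · exact Or.inr (Or.inl h2)
    · exact Or.inl h2
    · exact Or.inr (Or.inr (pentAdj_symm h2))⟩⟩
  loopless := ⟨fun a h => h.1 rfl⟩

/-- The sequence of part sizes `x, y, y, nn 0, nn 1, …` for a blowup of `L_r`. -/
def pentSizes (x y : ℕ) (nn : ℕ → ℕ) : ℕ → ℕ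
  | 0 => x
  | 1 => y
  | 2 => y
  | m + 3 => nn m

/-- The pentagon blowup `L_r[x, y, y, nn 0, …, nn (r-1)]`. -/
def pentagonBlowup (r x y : ℕ) (nn : ℕ → ℕ) :
    SimpleGraph ((i : Fin (r + 3)) × Fin (pentSizes x y nn i.val)) :=
  blowup (Lgraph r) (fun i => pentSizes x y nn i.val)

section Aux

open Finset

lemma edgeCount_eq_card_edgeFinset {V : Type*} [Fintype V] (G : SimpleGraph V)
    [Fintype G.edgeSet] : edgeCount G = #G.edgeFinset := by
  rw [edgeCount, Nat.card_eq_fintype_card, edgeFinset_card]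

lemma finFilterCard (m : ℕ) (p : ℕ → Prop) [DecidablePred p] :
    #(Finset.univ.filter fun v : Fin m => p v.val) = #((range m).filter p) := by
  rw [Finset.card_filter, Finset.card_filter]
  exact Fin.sum_univ_eq_sum_range (fun i => if p i then 1 else 0) m

lemma cntResidue (m r : ℕ) (hr : 0 < r) (t : ℕ) :
    #((range m).filter fun w => w % r = t % r) = m / r + if t % r < m % r then 1 else 0 := by
  rw [Finset.filter_congr (fun x _ => show (x % r = t % r) ↔ (x ≡ t [MOD r]) from Iff.rfl),
    ← Nat.count_eq_card_filter_range, Nat.count_modEq_card m hr t]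

lemma cntBelow (m r : ℕ) (hr : 0 < r) :
    #((range m).filter fun v => v % r < m % r) = (m % r) * (m / r + 1) := by
  set s := m % r with hs
  rw [Finset.card_eq_sum_card_fiberwise (f := fun v => v % r) (t := range r)
    (fun x _ => Finset.mem_range.mpr (Nat.mod_lt _ hr))]
  have key : ∀ t ∈ range r, #((range m).filter fun v => v % r < s ∧ v % r = t)
      = if t < s then m / r + 1 else 0 := by
    intro t ht
    rw [Finset.mem_range] at ht
    by_cases hts : t < s
    · rw [if_pos hts]
      have : ((range m).filter fun v => v % r < s ∧ v % r = t)
          = (range m).filter fun v => v % r = t % r := by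
        apply Finset.filter_congr
        intro x _
        rw [Nat.mod_eq_of_lt ht]
        constructor
        · exact fun h => h.2
        · exact fun h => ⟨h ▸ hts, h⟩
      rw [this, cntResidue m r hr t, Nat.mod_eq_of_lt ht, if_pos hts]
    · rw [if_neg hts]
      rw [Finset.card_eq_zero, Finset.filter_eq_empty_iff]
      rintro x _ ⟨h1, h2⟩
      exact hts (h2 ▸ h1)
  rw [Finset.sum_congr rfl (fun t ht => by rw [Finset.filter_filter, key t ht])]
  rw [← Finset.sum_filter]
  have hrange : (range r).filter (fun t => t < s) = range s := by
    ext x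
    simp only [Finset.mem_filter, Finset.mem_range]
    exact ⟨fun h => h.2, fun h => ⟨h.trans (Nat.mod_lt m hr), h⟩⟩
  rw [hrange, Finset.sum_const, Finset.card_range, smul_eq_mul]

lemma turanCount (m r : ℕ) (hr : 0 < r) :
    2 * #(turanGraph m r).edgeFinset + (m * (m / r) + (m % r) * (m / r + 1)) = m * m := by
  have hdeg : ∀ v : Fin m, (turanGraph m r).degree v
      + #(Finset.univ.filter fun w : Fin m => w.val % r = v.val % r) = m := by
    intro v
    rw [← card_neighborFinset_eq_degree, neighborFinset_eq_filter]
    have h2 : ∀ w : Fin m, (turanGraph m r).Adj v w ↔ ¬ (w.val % r = v.val % r) := by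
      intro w
      constructor
      · intro h hc; exact h hc.symm
      · intro h hc; exact h hc.symm
    rw [Finset.filter_congr (fun w _ => by rw [h2 w])]
    have h3 := Finset.card_filter_add_card_filter_not
      (s := (univ : Finset (Fin m))) (p := fun w : Fin m => w.val % r = v.val % r)
    simp only [card_univ, Fintype.card_fin] at h3
    omega
  have hcnt : ∀ v : Fin m, #(Finset.univ.filter fun w : Fin m => w.val % r = v.val % r)
      = m / r + if v.val % r < m % r then 1 else 0 := by
    intro v
    rw [finFilterCard m (fun w => w % r = v.val % r), cntResidue m r hr v.val]
  have hsum := (turanGraph m r).sum_degrees_eq_twice_card_edges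
  have hsum2 : ∑ v : Fin m, (m / r + if v.val % r < m % r then 1 else 0)
      = m * (m / r) + (m % r) * (m / r + 1) := by
    rw [Finset.sum_add_distrib]
    simp only [Finset.sum_const, card_univ, Fintype.card_fin, smul_eq_mul]
    congr 1
    rw [← Finset.card_filter, finFilterCard m (fun v => v % r < m % r), cntBelow m r hr]
  have htot : ∑ v : Fin m, ((turanGraph m r).degree v
      + #(Finset.univ.filter fun w : Fin m => w.val % r = v.val % r)) = m * m := by
    rw [Finset.sum_congr rfl (fun v _ => hdeg v)]
    simp [Finset.sum_const, card_univ, mul_comm]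
  rw [Finset.sum_add_distrib, hsum, Finset.sum_congr rfl (fun v _ => hcnt v), hsum2] at htot
  exact htot

lemma turanNum_real_bounds (m r : ℕ) (hr : 0 < r) :
    ((1:ℝ) - 1/r) * m^2 - r/4 ≤ 2 * (turanNum r m) ∧
    2 * (turanNum r m : ℝ) ≤ (1 - 1/r) * m^2 := by
  have h := turanCount m r hr
  rw [show #(turanGraph m r).edgeFinset = turanNum r m from
    (edgeCount_eq_card_edgeFinset _).symm] at h
  have hdm := Nat.div_add_mod m r
  have hsr := Nat.mod_lt m hr
  set q := m / r with hq
  set s := m % r with hs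
  have hcast : (r : ℝ) * q + s = m := by exact_mod_cast hdm
  have hcast2 : 2 * (turanNum r m : ℝ) + ((m : ℝ) * q + s * (q + 1)) = m * m := by
    exact_mod_cast h
  have hsr' : (s : ℝ) < r := by exact_mod_cast hsr
  have hr' : (1:ℝ) ≤ r := by exact_mod_cast hr
  have hs0 : (0:ℝ) ≤ s := Nat.cast_nonneg s
  have hq0 : (0:ℝ) ≤ q := Nat.cast_nonneg q
  have hrpos : (0:ℝ) < r := by linarith
  have key : ((1:ℝ) - 1/r) * m^2 - 2 * (turanNum r m) = s * (1 - s/r) := by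
    field_simp
    nlinarith [hcast, hcast2]
  constructor
  · have key2 : (s:ℝ) * (1 - s/r) ≤ r/4 := by
      have h5 : (s:ℝ) * (r - s) ≤ r/4 * r := by nlinarith [sq_nonneg ((r:ℝ) - 2*s)]
      calc (s:ℝ) * (1 - s/r) = s * (r - s) / r := by field_simp
        _ ≤ (r/4 * r) / r := by gcongr
        _ = r/4 := by field_simp
    linarith
  · rw [← sub_nonneg, key]
    have : (s:ℝ)/r ≤ 1 := by rw [div_le_one hrpos]; linarith
    nlinarith

lemma cliquefree_bound {W : Type*} [Fintype W] (r : ℕ) (hr : 0 < r) (H : SimpleGraph W)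
    (hH : H.CliqueFree (r + 1)) [Fintype H.edgeSet] :
    2 * (#H.edgeFinset : ℝ) ≤ (1 - 1/r) * (Fintype.card W)^2 := by
  classical
  set m := Fintype.card W with hm
  set e := Fintype.equivFin W with he
  set H' : SimpleGraph (Fin m) := H.comap e.symm with hH'
  have f : H' ≃g H := Iso.comap e.symm H
  have hfree' : H'.CliqueFree (r + 1) := hH.comap f.toEmbedding.isContained
  have hcard : #H'.edgeFinset = #H.edgeFinset := f.card_edgeFinset_eq
  have hle : #H'.edgeFinset ≤ #(turanGraph m r).edgeFinset :=
    (isTuranMaximal_turanGraph hr).2 hfree'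
  have hbd := (turanNum_real_bounds m r hr).2
  rw [show turanNum r m = #(turanGraph m r).edgeFinset from edgeCount_eq_card_edgeFinset _] at hbd
  rw [← hcard]
  calc 2 * (#H'.edgeFinset : ℝ) ≤ 2 * (#(turanGraph m r).edgeFinset : ℝ) := by
        exact_mod_cast mul_le_mul_of_nonneg_left (Nat.cast_le.mpr hle) (by norm_num)
    _ ≤ (1 - 1/r) * m^2 := hbd

variable {V : Type*} [Fintype V] [DecidableEq V] (G : SimpleGraph V) [DecidableRel G.Adj]

open scoped Classical in
/-- The number of edges of `G` with both endpoints in `A`. -/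
noncomputable def eIn (A : Finset V) : ℕ :=
  #(G.edgeFinset.filter (fun e => ∀ x ∈ e, x ∈ A))

lemma eIn_univ : eIn G Finset.univ = edgeCount G := by
  rw [eIn, edgeCount, Nat.card_eq_fintype_card, ← edgeFinset_card]
  congr 1
  apply Finset.filter_true_of_mem
  intro e _ x _
  exact Finset.mem_univ x

lemma eIn_erase (A : Finset V) (v : V) (hv : v ∈ A) :
    eIn G A = eIn G (A.erase v) + #(A ∩ G.neighborFinset v) := by
  classical
  rw [eIn, eIn]
  rw [← Finset.card_filter_add_card_filter_not
    (s := G.edgeFinset.filter (fun e => ∀ x ∈ e, x ∈ A)) (p := fun e => v ∈ e)]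
  rw [add_comm]
  congr 1
  · rw [Finset.filter_filter]
    have hA : (G.edgeFinset.filter fun e => (∀ x ∈ e, x ∈ A) ∧ ¬ v ∈ e)
        = G.edgeFinset.filter (fun e => ∀ x ∈ e, x ∈ A.erase v) := by
      ext e
      simp only [Finset.mem_filter, and_congr_right_iff]
      intro _
      constructor
      · rintro ⟨h1, h2⟩ x hx
        refine Finset.mem_erase.mpr ⟨?_, h1 x hx⟩
        rintro rfl; exact h2 hx
      · intro h
        exact ⟨fun x hx => Finset.mem_of_mem_erase (h x hx),
          fun hv' => (Finset.mem_erase.mp (h v hv')).1 rfl⟩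
    rw [hA]
  · rw [Finset.filter_filter]
    refine (Finset.card_nbij (fun w => s(v, w)) ?_ ?_ ?_).symm
    · intro w hw
      simp only [Finset.coe_inter, Set.mem_inter_iff, Finset.mem_coe, Finset.mem_inter,
        mem_neighborFinset] at hw
      simp only [Finset.mem_coe, Finset.mem_filter, mem_edgeFinset, mem_edgeSet]
      refine ⟨hw.2, fun x hx => ?_, Sym2.mem_mk_left v w⟩
      rcases Sym2.mem_iff.mp hx with rfl | rfl
      · exact hv
      · exact hw.1
    · intro w₁ _ w₂ _ h
      exact Sym2.congr_right.mp h
    · intro e he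
      simp only [Finset.mem_coe, Finset.mem_filter, mem_edgeFinset] at he
      obtain ⟨he1, he2, hve⟩ := he
      induction e with
      | _ x y =>
        rw [mem_edgeSet] at he1
        rcases Sym2.mem_iff.mp hve with rfl | rfl
        · refine ⟨y, ?_, rfl⟩
          simp only [Finset.coe_inter, Set.mem_inter_iff, Finset.mem_coe, mem_neighborFinset]
          exact ⟨he2 y (Sym2.mem_mk_right v y), he1⟩
        · refine ⟨x, ?_, Sym2.eq_swap⟩
          simp only [Finset.coe_inter, Set.mem_inter_iff, Finset.mem_coe, mem_neighborFinset]
          exact ⟨he2 x (Sym2.mem_mk_left x v), he1.symm⟩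

lemma eIn_eq_induce (A : Finset V) [Fintype (G.induce (↑A : Set V)).edgeSet] :
    eIn G A = #(G.induce (↑A : Set V)).edgeFinset := by
  classical
  rw [eIn]
  refine (Finset.card_nbij (fun e => Sym2.map Subtype.val e) ?_ ?_ ?_).symm
  · intro e he
    simp only [Finset.mem_coe, mem_edgeFinset] at he ⊢
    induction e with
    | _ a b =>
      rw [mem_edgeSet] at he
      simp only [comap_adj, Function.Embedding.coe_subtype] at he
      simp only [Sym2.map_pair_eq, Finset.mem_filter, mem_edgeFinset, mem_edgeSet]
      refine ⟨he, fun x hx => ?_⟩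
      rcases Sym2.mem_iff.mp hx with rfl | rfl
      · exact Finset.mem_coe.mp a.2
      · exact Finset.mem_coe.mp b.2
  · intro e₁ _ e₂ _ h
    exact Sym2.map.injective Subtype.val_injective h
  · intro e he
    simp only [Finset.mem_coe, Finset.mem_filter, mem_edgeFinset] at he
    obtain ⟨he1, he2⟩ := he
    induction e with
    | _ x y =>
      rw [mem_edgeSet] at he1
      have hx : x ∈ (↑A : Set V) := Finset.mem_coe.mpr (he2 x (Sym2.mem_mk_left x y))
      have hy : y ∈ (↑A : Set V) := Finset.mem_coe.mpr (he2 y (Sym2.mem_mk_right x y))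
      refine ⟨s(⟨x, hx⟩, ⟨y, hy⟩), ?_, ?_⟩
      · simp only [Finset.mem_coe, mem_edgeFinset, mem_edgeSet, comap_adj,
          Function.Embedding.coe_subtype]
        exact he1
      · show Sym2.map Subtype.val s(⟨x, hx⟩, ⟨y, hy⟩) = s(x, y)
        rw [Sym2.map_pair_eq]

lemma eIn_le_bound (r : ℕ) (hr : 0 < r) (hfree : G.CliqueFree (r + 1)) (A : Finset V) :
    2 * (eIn G A : ℝ) ≤ (1 - 1/r) * (A.card)^2 := by
  classical
  rw [eIn_eq_induce G A]
  have hind : (G.induce (↑A : Set V)).CliqueFree (r + 1) :=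
    hfree.comap (Embedding.induce (↑A : Set V)).isContained
  have := cliquefree_bound r hr (G.induce (↑A : Set V)) hind
  simpa using this

lemma rec_lemma (E0 D : ℝ) (K : ℕ) (A : Finset V) :
    Fintype.card V - A.card ≤ K →
    (E0 ≤ (eIn G A : ℝ) + ((Fintype.card V - A.card : ℕ) : ℝ) * D) →
    ∃ B ⊆ A, (E0 ≤ (eIn G B : ℝ) + ((Fintype.card V - B.card : ℕ) : ℝ) * D) ∧
      ((∀ v ∈ B, D ≤ (#(B ∩ G.neighborFinset v) : ℝ)) ∧ Fintype.card V - B.card < K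
        ∨ Fintype.card V - B.card = K) := by
  induction A using Finset.strongInduction with
  | _ A ih =>
    intro h1 h2
    by_cases hK : Fintype.card V - A.card = K
    · exact ⟨A, Finset.Subset.refl A, h2, Or.inr hK⟩
    · have hKlt : Fintype.card V - A.card < K := lt_of_le_of_ne h1 hK
      by_cases hdeg : ∀ v ∈ A, D ≤ (#(A ∩ G.neighborFinset v) : ℝ)
      · exact ⟨A, Finset.Subset.refl A, h2, Or.inl ⟨hdeg, hKlt⟩⟩
      · push_neg at hdeg
        obtain ⟨v, hvA, hvdeg⟩ := hdeg
        have hsub : A.erase v ⊂ A := Finset.erase_ssubset hvA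
        have hAcard : A.card ≤ Fintype.card V := by
          simpa using Finset.card_le_card (Finset.subset_univ A)
        have hA1 : 1 ≤ A.card := Finset.card_pos.mpr ⟨v, hvA⟩
        have hecard : (A.erase v).card = A.card - 1 := Finset.card_erase_of_mem hvA
        have hnat : Fintype.card V - (A.erase v).card = (Fintype.card V - A.card) + 1 := by
          omega
        have h1' : Fintype.card V - (A.erase v).card ≤ K := by omega
        have h2' : E0 ≤ (eIn G (A.erase v) : ℝ)
            + ((Fintype.card V - (A.erase v).card : ℕ) : ℝ) * D := by
          have he := eIn_erase G A v hvA
          have hcast : (eIn G A : ℝ) = (eIn G (A.erase v) : ℝ)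
              + (#(A ∩ G.neighborFinset v) : ℝ) := by exact_mod_cast he
          rw [hnat]
          push_cast
          nlinarith [hvdeg.le]
        obtain ⟨B, hBsub, hB1, hB2⟩ := ih (A.erase v) hsub h1' h2'
        exact ⟨B, hBsub.trans (Finset.erase_subset v A), hB1, hB2⟩

end Aux

set_option maxHeartbeats 1600000 in
/-- Let `r ≥ 2`, `0 < δ < r⁻⁶⁰`, `δn² > n/r`, and let `G` be a
`K_{r+1}`-free graph on `n` vertices with `e(G) ≥ t_r(n) - δn²`. Then there is `S ⊆ V(G)`
with `|S| ≤ 2δr¹⁰n` such that every `v ∉ S` has degree at least `n((r-1)/r - r⁻¹⁰)` in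
the induced subgraph `G - S`. -/
theorem stmt12 {V : Type} [Fintype V] (r n : ℕ) (hr : 2 ≤ r) (δ : ℝ)
    (hδ0 : 0 < δ) (hδ1 : δ < ((r : ℝ) ^ 60)⁻¹)
    (hcard : Fintype.card V = n)
    (hδn : (n : ℝ) / r < δ * n ^ 2)
    (G : SimpleGraph V) (hfree : G.CliqueFree (r + 1))
    (he : (turanNum r n : ℝ) - δ * n ^ 2 ≤ (edgeCount G : ℝ)) :
    ∃ S : Set V, (Nat.card S : ℝ) ≤ 2 * δ * r ^ 10 * n ∧
      ∀ v ∉ S, (n : ℝ) * (((r : ℝ) - 1) / r - ((r : ℝ) ^ 10)⁻¹) ≤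
        (Nat.card {w : V | w ∉ S ∧ G.Adj v w} : ℝ) := by
  classical
  subst hcard
  set n := Fintype.card V with hn
  have hr0 : 0 < r := by omega
  have hr2 : (2:ℝ) ≤ (r:ℝ) := by exact_mod_cast hr
  have hrpos : (0:ℝ) < r := by linarith
  have hn0 : 0 < n := by
    by_contra h
    push_neg at h
    have h0 : n = 0 := by omega
    rw [h0] at hδn
    norm_num at hδn
  have hnpos : (0:ℝ) < n := by exact_mod_cast hn0
  -- n > r ^ 59
  have hδnlin : (1:ℝ)/r < δ * n := by
    have h1 : ((n:ℝ)/r) < (δ * n) * n := by nlinarith [hδn]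
    have h2 : ((1:ℝ)/r) * n = (n:ℝ)/r := by ring
    have := h1
    rw [← h2] at this
    exact lt_of_mul_lt_mul_right this (le_of_lt hnpos)
  have hp60 : (0:ℝ) < (r:ℝ)^60 := by positivity
  have hnbig : (r:ℝ)^59 < n := by
    have h1 : δ * n < ((r:ℝ)^60)⁻¹ * n := by
      exact mul_lt_mul_of_pos_right hδ1 hnpos
    have h2 : (1:ℝ)/r < (n:ℝ) / r^60 := by
      have : ((r:ℝ)^60)⁻¹ * n = n / r^60 := by ring
      linarith [hδnlin, h1, this ▸ h1]
    rw [div_lt_div_iff₀ hrpos hp60] at h2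
    have e2 : (1:ℝ) * r^60 = (r^59) * r := by ring
    rw [e2] at h2
    exact lt_of_mul_lt_mul_right h2 (le_of_lt hrpos)
  set ε : ℝ := ((r:ℝ)^10)⁻¹ with hε
  have hεpos : (0:ℝ) < ε := by rw [hε]; positivity
  set D : ℝ := (n:ℝ) * (((r:ℝ) - 1)/r - ε) with hD
  set x : ℝ := 2*δ*(r:ℝ)^10*n with hx
  have hx0 : (0:ℝ) ≤ x := by rw [hx]; positivity
  set K : ℕ := ⌊x⌋₊ + 1 with hK
  have hKlb : x < (K:ℝ) := by rw [hK]; push_cast; exact Nat.lt_floor_add_one x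
  have hKub : (K:ℝ) ≤ x + 1 := by
    rw [hK]; push_cast; have := Nat.floor_le hx0; linarith
  -- apply the recursive deletion
  have hstart1 : n - (Finset.univ : Finset V).card ≤ K := by simp [hn]
  have hstart2 : (edgeCount G : ℝ) ≤ (eIn G Finset.univ : ℝ)
      + ((n - (Finset.univ : Finset V).card : ℕ) : ℝ) * D := by
    rw [eIn_univ]
    simp [hn]
  obtain ⟨B, hBsub, hB1, hB2⟩ := rec_lemma G (edgeCount G) D K Finset.univ hstart1 hstart2
  set k : ℕ := n - B.card with hk
  have hBcard : B.card ≤ n := by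
    simpa using Finset.card_le_card (Finset.subset_univ B)
  have hkn : k ≤ n := by omega
  have hBk : (B.card : ℝ) = (n:ℝ) - k := by
    have : k + B.card = n := by omega
    have hc : (k:ℝ) + B.card = n := by exact_mod_cast this
    linarith
  have hkpos : (0:ℝ) ≤ k := Nat.cast_nonneg k
  -- master inequality
  have hEB := eIn_le_bound G r hr0 hfree B
  have hT := (turanNum_real_bounds n r hr0).1
  have hDval : (k:ℝ) * D = (k:ℝ)*(n:ℝ) - (k:ℝ)*(n:ℝ)/r - (k:ℝ)*(n:ℝ)*ε := by
    rw [hD]; field_simp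
  have hMaster : (k:ℝ) * n * ε ≤ (k:ℝ)^2/2 + δ*(n:ℝ)^2 + (r:ℝ)/8 := by
    rw [hBk] at hEB
    have hrinv : (0:ℝ) < 1/r := by positivity
    have hk2 : (0:ℝ) ≤ (k:ℝ)^2 / r := by positivity
    have exp1 : (1 - 1/(r:ℝ)) * ((n:ℝ) - (k:ℝ))^2 = (n:ℝ)^2 - 2*(n:ℝ)*(k:ℝ) + (k:ℝ)^2
        - (n:ℝ)^2/r + 2*((n:ℝ)*(k:ℝ))/r - (k:ℝ)^2/r := by ring
    have exp2 : (1 - 1/(r:ℝ)) * (n:ℝ)^2 = (n:ℝ)^2 - (n:ℝ)^2/r := by ring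
    rw [exp1] at hEB
    rw [exp2] at hT
    rw [hDval] at hB1
    ring_nf at he hB1 hEB hT hk2 ⊢
    linarith [he, hB1, hEB, hT, hk2]
  have hcompl : (Bᶜ : Finset V).card = k := by rw [Finset.card_compl]
  clear_value x K D ε k
  rcases hB2 with ⟨hmin, hlt⟩ | heq
  · -- good case: take S = Bᶜ
    refine ⟨((Bᶜ : Finset V) : Set V), ?_, ?_⟩
    · have hcardS : (Nat.card ((Bᶜ : Finset V) : Set V) : ℝ) = ((Bᶜ : Finset V).card : ℝ) := by
        rw [Nat.card_coe_set_eq, Set.ncard_coe_finset]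
      rw [hcardS]
      rw [hcompl]
      have hkfl : k ≤ ⌊x⌋₊ := by omega
      calc (k:ℝ) ≤ (⌊x⌋₊ : ℝ) := by exact_mod_cast hkfl
        _ ≤ x := Nat.floor_le hx0
    · intro v hv
      have hvB : v ∈ B := by
        by_contra hvB
        exact hv (by simpa using hvB)
      have hset : {w : V | w ∉ ((Bᶜ : Finset V) : Set V) ∧ G.Adj v w}
          = ((B ∩ G.neighborFinset v : Finset V) : Set V) := by
        ext w
        simp only [Set.mem_setOf_eq, Finset.coe_inter, Set.mem_inter_iff, Finset.mem_coe,
          Finset.mem_compl, not_not, mem_neighborFinset]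
      rw [hset, Nat.card_coe_set_eq, Set.ncard_coe_finset]
      exact hmin v hvB
  · -- contradiction case
    exfalso
    have hkK : (k:ℝ) = (K:ℝ) := by exact_mod_cast heq
    have hr10 : ((r:ℝ)^10) ≠ 0 := by positivity
    have hxe : x * ((n:ℝ) * ε) = 2*δ*(n:ℝ)^2 := by
      rw [hx, hε,
        show (2*δ*(r:ℝ)^10*(n:ℝ))*((n:ℝ)*((r:ℝ)^10)⁻¹)
          = (2*δ*(n:ℝ)^2)*((r:ℝ)^10*((r:ℝ)^10)⁻¹) from by ring,
        mul_inv_cancel₀ hr10, mul_one]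
    have hlb : 2*δ*(n:ℝ)^2 < (k:ℝ)*(n:ℝ)*ε := by
      have hne : (0:ℝ) < (n:ℝ)*ε := by positivity
      have h1 := mul_lt_mul_of_pos_right hKlb hne
      rw [hxe] at h1
      calc 2*δ*(n:ℝ)^2 < (K:ℝ)*((n:ℝ)*ε) := h1
        _ = (k:ℝ)*(n:ℝ)*ε := by rw [← hkK]; ring
    have hmain2 : δ*(n:ℝ)^2 < (k:ℝ)^2/2 + (r:ℝ)/8 := by linarith [hMaster, hlb]
    have hkx : (k:ℝ) ≤ x + 1 := by rw [hkK]; exact hKub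
    have hksq : (k:ℝ)^2 ≤ (x+1)^2 := pow_le_pow_left₀ hkpos hkx 2
    have h40 : (2:ℝ)^40 ≤ (r:ℝ)^40 := pow_le_pow_left₀ (by norm_num) hr2 40
    have h49 : (2:ℝ)^49 ≤ (r:ℝ)^49 := pow_le_pow_left₀ (by norm_num) hr2 49
    have h57 : (2:ℝ)^57 ≤ (r:ℝ)^57 := pow_le_pow_left₀ (by norm_num) hr2 57
    have hδr20 : δ * (r:ℝ)^20 ≤ 1/8 := by
      have h1 : δ * (r:ℝ)^20 < ((r:ℝ)^60)⁻¹ * (r:ℝ)^20 :=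
        mul_lt_mul_of_pos_right hδ1 (by positivity)
      have h2 : ((r:ℝ)^60)⁻¹ * (r:ℝ)^20 = ((r:ℝ)^40)⁻¹ := by
        rw [show (r:ℝ)^60 = (r:ℝ)^40 * (r:ℝ)^20 from by ring, mul_inv, mul_assoc,
          inv_mul_cancel₀ (by positivity : ((r:ℝ)^20) ≠ 0), mul_one]
      have h3 : ((r:ℝ)^40)⁻¹ ≤ ((2:ℝ)^40)⁻¹ := by
        apply inv_anti₀ (by norm_num) h40
      have h4 : ((2:ℝ)^40)⁻¹ ≤ 1/8 := by norm_num
      linarith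
    have hδn2pos : (0:ℝ) < δ*(n:ℝ)^2 := by positivity
    have hA1 : x^2/2 ≤ δ*(n:ℝ)^2/4 := by
      rw [hx]
      have hxx : (2*δ*(r:ℝ)^10*(n:ℝ))^2 / 2 = 2*(δ*(r:ℝ)^20)*(δ*(n:ℝ)^2) := by ring
      rw [hxx]
      have h5 := mul_le_mul_of_nonneg_right hδr20 (le_of_lt hδn2pos)
      linarith
    have h16 : (16:ℝ) ≤ (2:ℝ)^49 := by norm_num
    have hn16 : 16*(r:ℝ)^10 ≤ (n:ℝ) := by
      have hid : (r:ℝ)^49 * (r:ℝ)^10 = (r:ℝ)^59 := by ring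
      have hp10 : (0:ℝ) ≤ (r:ℝ)^10 := by positivity
      have t1 : 16*(r:ℝ)^10 ≤ (2:ℝ)^49 * (r:ℝ)^10 := mul_le_mul_of_nonneg_right h16 hp10
      have t2 : (2:ℝ)^49 * (r:ℝ)^10 ≤ (r:ℝ)^49 * (r:ℝ)^10 := mul_le_mul_of_nonneg_right h49 hp10
      linarith
    have hA2 : x ≤ δ*(n:ℝ)^2/4 := by
      rw [hx]
      have h2δn : (0:ℝ) ≤ 2*δ*(n:ℝ) := by positivity
      have t1 : (2*δ*(n:ℝ))*((r:ℝ)^10) ≤ (2*δ*(n:ℝ))*((n:ℝ)/16) :=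
        mul_le_mul_of_nonneg_left (by linarith) h2δn
      have e1 : (2*δ*(n:ℝ))*((n:ℝ)/16) = δ*(n:ℝ)^2/8 := by ring
      have e2 : 2*δ*(r:ℝ)^10*(n:ℝ) = (2*δ*(n:ℝ))*((r:ℝ)^10) := by ring
      rw [e2]
      linarith
    have hr58 : (r:ℝ)^58 < δ*(n:ℝ)^2 := by
      have h2 : (r:ℝ)^58 < (n:ℝ)/r := by
        rw [lt_div_iff₀ hrpos, show (r:ℝ)^58*(r:ℝ) = (r:ℝ)^59 from by ring]
        exact hnbig
      linarith [hδn]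
    have h4c : (4:ℝ) ≤ (2:ℝ)^57 := by norm_num
    have hA3 : 1/2 + (r:ℝ)/8 ≤ δ*(n:ℝ)^2/4 := by
      have hid : (r:ℝ)^57 * (r:ℝ) = (r:ℝ)^58 := by ring
      have t1 : 4*(r:ℝ) ≤ (r:ℝ)^57 * (r:ℝ) :=
        mul_le_mul_of_nonneg_right (by linarith) (by linarith)
      linarith
    have hfinal : δ*(n:ℝ)^2 < δ*(n:ℝ)^2 := by
      calc δ*(n:ℝ)^2 < (k:ℝ)^2/2 + (r:ℝ)/8 := hmain2
        _ ≤ (x+1)^2/2 + (r:ℝ)/8 := by linarith [hksq]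
        _ = x^2/2 + x + (1/2 + (r:ℝ)/8) := by ring
        _ ≤ δ*(n:ℝ)^2/4 + δ*(n:ℝ)^2/4 + δ*(n:ℝ)^2/4 := by linarith [hA1, hA2, hA3]
        _ < δ*(n:ℝ)^2 := by linarith [hδn2pos]
    exact lt_irrefl _ hfinal
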